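/- Fix 0 < γ, γ' < 1 and let G be a graph on vertex set V. Suppose V = V₁ ∪ V₂ with V₁ ∩ V₂ = ∅ and |V₁| ≥ γ'/γ. If the number of edges of G inside V₁ is at least (1 − γ)·C(|V₁|, 2) and the number of edges of G between V₁ and V₂ is at least γ'|V₁||V₂|, then the number of triangles in G with two vertices in V₁ and one vertex in V₂ is at least (γ'² − 2γ)·C(|V₁|, 2)·|V₂|. -/

import Mathlib

/-- The number of edges of `G` between `A` and `B` (counted as pairs in `A × B`). -/
def crossEdges {V : Type*} [DecidableEq V] (G : SimpleGraph V) [DecidableRel G.Adj]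
    (A B : Finset V) : ℕ :=
  ((A ×ˢ B).filter (fun p => G.Adj p.1 p.2)).card

set_option maxHeartbeats 1600000 in
/-- Fact (iii): if `V = V₁ ∪ V₂` with `|V₁| ≥ γ'/γ`, the number of edges
inside `V₁` is at least `(1 - γ)·C(|V₁|, 2)` and `e(V₁, V₂) ≥ γ'|V₁||V₂|`, then the
number of triangles with two vertices in `V₁` and one in `V₂` is at least
`(γ'² - 2γ)·C(|V₁|, 2)·|V₂|`. -/
theorem triangles_two_one {V : Type*} [Fintype V] [DecidableEq V]
    (γ γ' : ℝ) (hγ0 : 0 < γ) (hγ1 : γ < 1) (hγ'0 : 0 < γ') (hγ'1 : γ' < 1)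
    (G : SimpleGraph V) [DecidableRel G.Adj]
    (V₁ V₂ : Finset V) (hdisj : Disjoint V₁ V₂) (hcover : V₁ ∪ V₂ = Finset.univ)
    (hsize : γ' / γ ≤ (V₁.card : ℝ))
    (he1 : (1 - γ) * ((V₁.card).choose 2 : ℝ) ≤
      (((G.cliqueFinset 2).filter (fun t => t ⊆ V₁)).card : ℝ))
    (he12 : γ' * ((V₁.card : ℝ) * V₂.card) ≤ (crossEdges G V₁ V₂ : ℝ)) :
    (γ' ^ 2 - 2 * γ) * ((V₁.card).choose 2 : ℝ) * (V₂.card : ℝ) ≤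
      (((G.cliqueFinset 3).filter
        (fun t => (t ∩ V₁).card = 2 ∧ (t ∩ V₂).card = 1)).card : ℝ) := by
  classical
  set T := (G.cliqueFinset 3).filter
      (fun t => (t ∩ V₁).card = 2 ∧ (t ∩ V₂).card = 1) with hT
  -- trivial cases
  by_cases htriv : γ' ^ 2 - 2 * γ ≤ 0
  · have h0 : (γ' ^ 2 - 2 * γ) * ((V₁.card).choose 2 : ℝ) * (V₂.card : ℝ) ≤ 0 := by
      have h1 : (0:ℝ) ≤ ((V₁.card).choose 2 : ℝ) * (V₂.card : ℝ) := by positivity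
      nlinarith
    exact h0.trans (Nat.cast_nonneg _)
  push_neg at htriv
  rcases Nat.eq_zero_or_pos V₂.card with hn2 | hn2
  · rw [hn2]; simp
  -- notation
  have hn₁γ : γ' ≤ γ * (V₁.card : ℝ) := by
    rw [div_le_iff₀ hγ0] at hsize; linarith
  set d : V → ℕ := fun v => (V₁.filter (fun a => G.Adj v a)).card with hd
  set S : V → Finset (Finset V) := fun v =>
    ((V₁.filter (fun a => G.Adj v a)).powersetCard 2).filter
      (fun e => G.IsNClique 2 e) with hSdef
  set bad : Finset (Finset V) :=
    (V₁.powersetCard 2).filter (fun e => ¬ G.IsNClique 2 e) with hbaddef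
  -- cross edges as a sum of degrees
  have hA : crossEdges G V₁ V₂ = ∑ v ∈ V₂, d v := by
    simp only [hd]
    unfold crossEdges
    rw [Finset.card_filter, Finset.sum_product, Finset.sum_comm]
    refine Finset.sum_congr rfl fun v hv => ?_
    rw [Finset.card_filter]
    exact Finset.sum_congr rfl fun a ha => by simp [G.adj_comm]
  have hvnotV₁ : ∀ v ∈ V₂, v ∉ V₁ := fun v hv hv1 =>
    (Finset.disjoint_left.mp hdisj) hv1 hv
  -- properties of members of S v
  have hmemS : ∀ v ∈ V₂, ∀ e ∈ S v,
      e ⊆ V₁ ∧ e.card = 2 ∧ G.IsNClique 2 e ∧ ∀ b ∈ e, G.Adj v b := by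
    intro v hv e he
    rw [hSdef, Finset.mem_filter, Finset.mem_powersetCard] at he
    obtain ⟨⟨hsub, hcard⟩, hcl⟩ := he
    refine ⟨fun x hx => (Finset.mem_filter.mp (hsub hx)).1, hcard, hcl,
      fun b hb => (Finset.mem_filter.mp (hsub hb)).2⟩
  -- insertion produces triangles in T
  have hins : ∀ v ∈ V₂, ∀ e ∈ S v,
      insert v e ∩ V₁ = e ∧ insert v e ∩ V₂ = {v} ∧ insert v e ∈ T := by
    intro v hv e he
    obtain ⟨hsub, hcard, hcl, hadj⟩ := hmemS v hv e he
    have hi1 : insert v e ∩ V₁ = e := by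
      rw [Finset.insert_inter_of_notMem (hvnotV₁ v hv), Finset.inter_eq_left.mpr hsub]
    have he2 : e ∩ V₂ = ∅ := by
      apply Finset.eq_empty_of_forall_notMem
      intro x hx
      rw [Finset.mem_inter] at hx
      exact hvnotV₁ x hx.2 (hsub hx.1)
    have hi2 : insert v e ∩ V₂ = {v} := by
      rw [Finset.insert_inter_of_mem hv, he2]; rfl
    refine ⟨hi1, hi2, ?_⟩
    rw [hT, Finset.mem_filter, SimpleGraph.mem_cliqueFinset_iff]
    exact ⟨hcl.insert hadj, by rw [hi1]; exact hcard, by rw [hi2]; simp⟩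
  -- count: sum of |S v| ≤ |T|
  have hsum : ∑ v ∈ V₂, (S v).card ≤ T.card := by
    have hinj : ∀ v ∈ V₂, Set.InjOn (insert v) ((S v : Finset (Finset V)) : Set (Finset V)) := by
      intro v hv e1 he1 e2 he2 heq
      have h1 := (hins v hv e1 (Finset.mem_coe.mp he1)).1
      have h2 := (hins v hv e2 (Finset.mem_coe.mp he2)).1
      rw [← h1, ← h2, heq]
    have hdisj' : ∀ v₁ ∈ V₂, ∀ v₂ ∈ V₂, v₁ ≠ v₂ →
        Disjoint ((S v₁).image (insert v₁)) ((S v₂).image (insert v₂)) := by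
      intro v₁ hv₁ v₂ hv₂ hne
      rw [Finset.disjoint_left]
      intro t ht1 ht2
      obtain ⟨e1, he1, rfl⟩ := Finset.mem_image.mp ht1
      obtain ⟨e2, he2, heq⟩ := Finset.mem_image.mp ht2
      have h1 := (hins v₁ hv₁ e1 he1).2.1
      have h2 := (hins v₂ hv₂ e2 he2).2.1
      rw [heq] at h2
      rw [h1] at h2
      exact hne (Finset.singleton_injective h2)
    calc ∑ v ∈ V₂, (S v).card
        = ∑ v ∈ V₂, ((S v).image (insert v)).card :=
          Finset.sum_congr rfl fun v hv => (Finset.card_image_of_injOn (hinj v hv)).symm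
      _ = (V₂.biUnion fun v => (S v).image (insert v)).card :=
          (Finset.card_biUnion hdisj').symm
      _ ≤ T.card := by
          apply Finset.card_le_card
          intro t ht
          obtain ⟨v, hv, ht⟩ := Finset.mem_biUnion.mp ht
          obtain ⟨e, he, rfl⟩ := Finset.mem_image.mp ht
          exact (hins v hv e he).2.2
  -- per-vertex: choose (d v) 2 ≤ |S v| + |bad|
  have hCv : ∀ v ∈ V₂, (d v).choose 2 ≤ (S v).card + bad.card := by
    intro v hv
    have hsub : (V₁.filter (fun a => G.Adj v a)).powersetCard 2 ⊆ S v ∪ bad := by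
      intro e he
      rw [Finset.mem_powersetCard] at he
      by_cases hcl : G.IsNClique 2 e
      · exact Finset.mem_union_left _ (by
          rw [hSdef, Finset.mem_filter, Finset.mem_powersetCard]; exact ⟨he, hcl⟩)
      · refine Finset.mem_union_right _ ?_
        rw [hbaddef, Finset.mem_filter, Finset.mem_powersetCard]
        exact ⟨⟨fun x hx => (Finset.mem_filter.mp (he.1 hx)).1, he.2⟩, hcl⟩
    calc (d v).choose 2 = ((V₁.filter (fun a => G.Adj v a)).powersetCard 2).card := by
          rw [Finset.card_powersetCard]
      _ ≤ (S v ∪ bad).card := Finset.card_le_card hsub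
      _ ≤ (S v).card + bad.card := Finset.card_union_le _ _
  -- bad card bound
  have hgood : (V₁.powersetCard 2).filter (fun e => G.IsNClique 2 e)
      = (G.cliqueFinset 2).filter (fun t => t ⊆ V₁) := by
    ext e
    simp only [Finset.mem_filter, Finset.mem_powersetCard, SimpleGraph.mem_cliqueFinset_iff]
    constructor
    · rintro ⟨⟨h1, h2⟩, h3⟩; exact ⟨h3, h1⟩
    · rintro ⟨h1, h2⟩; exact ⟨⟨h2, h1.2⟩, h1⟩
  have hbadcard : ((G.cliqueFinset 2).filter (fun t => t ⊆ V₁)).card + bad.card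
      = (V₁.card).choose 2 := by
    rw [← hgood, hbaddef, Finset.card_filter_add_card_filter_not,
      Finset.card_powersetCard]
  -- main nat inequality
  have hNat : ∑ v ∈ V₂, (d v).choose 2 ≤ T.card + V₂.card * bad.card := by
    calc ∑ v ∈ V₂, (d v).choose 2 ≤ ∑ v ∈ V₂, ((S v).card + bad.card) :=
          Finset.sum_le_sum hCv
      _ = (∑ v ∈ V₂, (S v).card) + V₂.card * bad.card := by
          rw [Finset.sum_add_distrib, Finset.sum_const, smul_eq_mul]
      _ ≤ T.card + V₂.card * bad.card := by omega
  -- move to the reals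
  set n₁ : ℝ := (V₁.card : ℝ) with hn₁
  set n₂ : ℝ := (V₂.card : ℝ) with hn₂def
  have hn₂1 : (1:ℝ) ≤ n₂ := by rw [hn₂def]; exact_mod_cast hn2
  have hn₂0 : (0:ℝ) < n₂ := by linarith
  have hn₁0 : (0:ℝ) ≤ n₁ := by rw [hn₁]; positivity
  set E : ℝ := ∑ v ∈ V₂, (d v : ℝ) with hE
  have hEcross : γ' * (n₁ * n₂) ≤ E := by
    refine he12.trans ?_
    rw [hA, hE]; push_cast; exact le_refl _
  set m2 : ℝ := ((V₁.card).choose 2 : ℝ) with hm2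
  have hm2eq : m2 = n₁ * (n₁ - 1) / 2 := by
    rw [hm2, hn₁, Nat.cast_choose_two]
  have hbadR : (bad.card : ℝ) ≤ γ * m2 := by
    have h : (((G.cliqueFinset 2).filter (fun t => t ⊆ V₁)).card : ℝ) + (bad.card : ℝ)
        = m2 := by rw [hm2]; exact_mod_cast hbadcard
    linarith [he1]
  have hsq : E ^ 2 ≤ n₂ * ∑ v ∈ V₂, (d v : ℝ) ^ 2 := by
    rw [hE, hn₂def]; exact sq_sum_le_card_mul_sum_sq
  have hchoose : ∑ v ∈ V₂, ((d v).choose 2 : ℝ)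
      = ((∑ v ∈ V₂, (d v : ℝ) ^ 2) - E) / 2 := by
    rw [hE, ← Finset.sum_sub_distrib, Finset.sum_div]
    refine Finset.sum_congr rfl fun v hv => ?_
    rw [Nat.cast_choose_two]; ring
  have hTlow : ((∑ v ∈ V₂, (d v : ℝ) ^ 2) - E) / 2 - n₂ * (γ * m2) ≤ (T.card : ℝ) := by
    have h1 : (∑ v ∈ V₂, ((d v).choose 2 : ℝ)) ≤ (T.card : ℝ) + n₂ * (bad.card : ℝ) := by
      have h := (Nat.cast_le (α := ℝ)).mpr hNat
      push_cast at h
      exact h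
    rw [hchoose] at h1
    nlinarith [hn₂0, hbadR]
  -- key arithmetic
  set Q : ℝ := ∑ v ∈ V₂, (d v : ℝ) ^ 2 with hQ
  clear_value Q E m2 n₁ n₂ T d S bad
  clear hQ hE hm2 hn₁ hn₂def hT hd hSdef hbaddef
  clear hA hNat hchoose hbadcard hbadR hgood hCv hsum hins hmemS hvnotV₁
  clear hsize he12 he1 hdisj hcover hn2
  have hγ'n₁ : 2 ≤ γ' * n₁ := by
    nlinarith [mul_le_mul_of_nonneg_left hn₁γ hγ'0.le]
  have hfact : 0 ≤ (E - γ' * n₁ * n₂) * (E + γ' * n₁ * n₂ - n₂) := by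
    apply mul_nonneg
    · nlinarith [hEcross]
    · nlinarith [hEcross, mul_nonneg (by linarith : (0:ℝ) ≤ 2 * (γ' * n₁) - 1) hn₂0.le]
  have hpos1 : 0 ≤ γ * n₁ + γ' ^ 2 - γ' - γ := by nlinarith
  have hkey : (γ' ^ 2 - γ) * (n₁ * (n₁ - 1)) * n₂ ^ 2 ≤ E ^ 2 - E * n₂ := by
    nlinarith [hfact, mul_nonneg (mul_nonneg hpos1 hn₁0) (sq_nonneg n₂)]
  have hsumsq : E ^ 2 / n₂ ≤ Q := by
    rw [div_le_iff₀ hn₂0]; nlinarith [hsq]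
  have h2 : (γ' ^ 2 - γ) * (n₁ * (n₁ - 1)) * n₂ ≤ E ^ 2 / n₂ - E := by
    have heq : E ^ 2 / n₂ - E = (E ^ 2 - E * n₂) / n₂ := by field_simp
    rw [heq, le_div_iff₀ hn₂0]
    nlinarith [hkey]
  rw [hm2eq] at hTlow ⊢
  nlinarith [hTlow, hsumsq, h2, hn₂0]
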